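/- Let A ∈ ℝ^{n×n}, B ∈ ℝ^{n×m}, Q ∈ ℝ^{n×n} symmetric, R ∈ ℝ^{m×m} symmetric positive definite, and W ∈ ℝ^{n×n} symmetric. Suppose P* ∈ ℝ^{n×n} is symmetric positive semidefinite, R + BᵀP*B is invertible, P* satisfies the discrete-time algebraic Riccati equation P* = AᵀP*A + Q − AᵀP*B(R+BᵀP*B)⁻¹BᵀP*A, and set K* = −(R+BᵀP*B)⁻¹BᵀP*A. Let K ∈ ℝ^{m×n} and let X ∈ ℝ^{n×n} be symmetric and satisfy the discrete-time Lyapunov equation (A+BK)X(A+BK)ᵀ − X + W = 0. Then the completion-of-squares identity holds: trace((Q + KᵀRK)X) = trace(P*W) + trace((K−K*)ᵀ(R + BᵀP*B)(K−K*)X). In particular, if X is positive semidefinite, then trace((Q+KᵀRK)X) − trace(P*W) ≥ trace(R(K−K*)X(K−K*)ᵀ) ≥ 0. -/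

import Mathlib

open Matrix

noncomputable section

private lemma lqr_trace_nonneg_of_psd {k : ℕ} {M : Matrix (Fin k) (Fin k) ℝ}
    (hM : M.PosSemidef) : 0 ≤ M.trace := by
  rw [Matrix.trace]
  apply Finset.sum_nonneg
  intro i _
  exact hM.diag_nonneg

private lemma lqr_trace_mul_psd_nonneg {k : ℕ} {M N : Matrix (Fin k) (Fin k) ℝ}
    (hM : M.PosSemidef) (hN : N.PosSemidef) : 0 ≤ (M * N).trace := by
  obtain ⟨C, rfl⟩ : ∃ C : Matrix (Fin k) (Fin k) ℝ, N = Cᵀ * C := by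
    open scoped MatrixOrder in
    obtain ⟨X, hX, -, hXX⟩ := CFC.exists_sqrt_of_isSelfAdjoint_of_quasispectrumRestricts
      hN.isHermitian (QuasispectrumRestricts.nnreal_of_nonneg hN.nonneg)
    refine ⟨X, ?_⟩
    have hXt : Xᵀ = X := by
      have h := hX.star_eq
      rwa [Matrix.star_eq_conjTranspose, Matrix.conjTranspose_eq_transpose_of_trivial] at h
    rw [hXt, hXX]
  rw [← Matrix.mul_assoc, Matrix.trace_mul_cycle]
  exact lqr_trace_nonneg_of_psd (hM.mul_mul_conjTranspose_same C)

/-- Completion-of-squares identity for the discrete-time LQR, and the resulting lower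
bound on the optimality gap. -/
theorem stmt_5 {n m : ℕ}
    (A : Matrix (Fin n) (Fin n) ℝ) (B : Matrix (Fin n) (Fin m) ℝ)
    (Q W Pstar X : Matrix (Fin n) (Fin n) ℝ)
    (R : Matrix (Fin m) (Fin m) ℝ)
    (K Kstar : Matrix (Fin m) (Fin n) ℝ)
    (hQ : Q.IsHermitian) (hR : R.PosDef) (hW : W.IsHermitian)
    (hPs : Pstar.PosSemidef)
    (hUnit : IsUnit (R + Bᵀ * Pstar * B))
    (hRic : Pstar = Aᵀ * Pstar * A + Q -
      Aᵀ * Pstar * B * (R + Bᵀ * Pstar * B)⁻¹ * Bᵀ * Pstar * A)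
    (hKs : Kstar = -((R + Bᵀ * Pstar * B)⁻¹ * Bᵀ * Pstar * A))
    (hX : X.IsHermitian)
    (hXEq : (A + B * K) * X * (A + B * K)ᵀ - X + W = 0) :
    Matrix.trace ((Q + Kᵀ * R * K) * X) =
        Matrix.trace (Pstar * W) +
          Matrix.trace ((K - Kstar)ᵀ * (R + Bᵀ * Pstar * B) * (K - Kstar) * X) ∧
      (X.PosSemidef →
        Matrix.trace (R * (K - Kstar) * X * (K - Kstar)ᵀ) ≤
            Matrix.trace ((Q + Kᵀ * R * K) * X) - Matrix.trace (Pstar * W) ∧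
          0 ≤ Matrix.trace (R * (K - Kstar) * X * (K - Kstar)ᵀ)) := by
  set S := R + Bᵀ * Pstar * B with hS
  have hdet : IsUnit S.det := (Matrix.isUnit_iff_isUnit_det S).mp hUnit
  have hSinv : S * S⁻¹ = 1 := Matrix.mul_nonsing_inv S hdet
  have hPsym : Pstarᵀ = Pstar := by
    have h := hPs.1.eq
    rwa [Matrix.conjTranspose_eq_transpose_of_trivial] at h
  have hRsym : Rᵀ = R := by
    have h := hR.1.eq
    rwa [Matrix.conjTranspose_eq_transpose_of_trivial] at h
  have hSsym : Sᵀ = S := by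
    rw [hS, Matrix.transpose_add, Matrix.transpose_mul, Matrix.transpose_mul,
      Matrix.transpose_transpose, hPsym, hRsym, Matrix.mul_assoc]
  have hSisym : (S⁻¹)ᵀ = S⁻¹ := by
    rw [Matrix.transpose_nonsing_inv, hSsym]
  have h1 : S * Kstar = -(Bᵀ * Pstar * A) := by
    rw [hKs, Matrix.mul_neg, ← Matrix.mul_assoc, ← Matrix.mul_assoc, ← Matrix.mul_assoc,
      hSinv, Matrix.one_mul]
  have hKsT : Kstarᵀ = -(Aᵀ * Pstar * B * S⁻¹) := by
    rw [hKs, Matrix.transpose_neg, Matrix.transpose_mul, Matrix.transpose_mul,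
      Matrix.transpose_mul, Matrix.transpose_transpose, hPsym, hSisym]
    simp [Matrix.mul_assoc]
  have h2 : Kstarᵀ * S = -(Aᵀ * Pstar * B) := by
    rw [hKsT, Matrix.neg_mul, Matrix.mul_assoc, Matrix.mul_assoc,
      Matrix.nonsing_inv_mul S hdet, Matrix.mul_one, Matrix.mul_assoc]
  have h3 : Kstarᵀ * S * Kstar = Aᵀ * Pstar * B * (S⁻¹ * (Bᵀ * Pstar * A)) := by
    rw [h2, hKs]
    simp [Matrix.mul_assoc]
  have key : Q + Kᵀ * R * K =
      Pstar - (A + B * K)ᵀ * Pstar * (A + B * K) + (K - Kstar)ᵀ * S * (K - Kstar) := by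
    have e : (K - Kstar)ᵀ * S * (K - Kstar) =
        Kᵀ * S * K - Kᵀ * (S * Kstar) - (Kstarᵀ * S) * K + Kstarᵀ * S * Kstar := by
      rw [Matrix.transpose_sub]
      simp only [Matrix.sub_mul, Matrix.mul_sub, Matrix.mul_assoc]
      abel
    have h4 : (K - Kstar)ᵀ * S * (K - Kstar) =
        Kᵀ * S * K + Kᵀ * (Bᵀ * Pstar * A) + Aᵀ * Pstar * B * K
          + Aᵀ * Pstar * B * (S⁻¹ * (Bᵀ * Pstar * A)) := by
      rw [e, h1, h3, h2]
      simp [Matrix.mul_neg, Matrix.neg_mul, sub_neg_eq_add]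
    rw [h4]
    nth_rewrite 1 [hRic]
    rw [Matrix.transpose_add, Matrix.transpose_mul, hS]
    simp only [Matrix.add_mul, Matrix.mul_add, Matrix.sub_mul, Matrix.mul_sub, Matrix.mul_assoc]
    abel
  have hW' : W = X - (A + B * K) * X * (A + B * K)ᵀ := by
    apply eq_of_sub_eq_zero
    rw [← hXEq]
    abel
  have hc : ((A + B * K)ᵀ * Pstar * (A + B * K) * X).trace
      = (Pstar * ((A + B * K) * X * (A + B * K)ᵀ)).trace := by
    rw [show (A + B * K)ᵀ * Pstar * (A + B * K) * X
        = (A + B * K)ᵀ * (Pstar * ((A + B * K) * X)) by simp [Matrix.mul_assoc],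
      Matrix.trace_mul_comm]
    simp [Matrix.mul_assoc]
  have main : Matrix.trace ((Q + Kᵀ * R * K) * X) =
      Matrix.trace (Pstar * W) + Matrix.trace ((K - Kstar)ᵀ * S * (K - Kstar) * X) := by
    rw [key, Matrix.add_mul, Matrix.sub_mul, Matrix.trace_add, Matrix.trace_sub, hc, hW']
    rw [show Pstar * (X - (A + B * K) * X * (A + B * K)ᵀ)
        = Pstar * X - Pstar * ((A + B * K) * X * (A + B * K)ᵀ) from Matrix.mul_sub ..]
    rw [Matrix.trace_sub]
  refine ⟨main, fun hXp => ?_⟩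
  have hBPB : (Bᵀ * Pstar * B).PosSemidef := by
    have h := hPs.conjTranspose_mul_mul_same B
    rwa [Matrix.conjTranspose_eq_transpose_of_trivial] at h
  have hcongr1 : ((K - Kstar)ᵀ * (Bᵀ * Pstar * B) * (K - Kstar)).PosSemidef := by
    have h := hBPB.conjTranspose_mul_mul_same (K - Kstar)
    rwa [Matrix.conjTranspose_eq_transpose_of_trivial] at h
  have hpos1 : 0 ≤ ((K - Kstar)ᵀ * (Bᵀ * Pstar * B) * (K - Kstar) * X).trace :=
    lqr_trace_mul_psd_nonneg hcongr1 hXp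
  have hΔXΔ : ((K - Kstar) * X * (K - Kstar)ᵀ).PosSemidef := by
    have h := hXp.mul_mul_conjTranspose_same (K - Kstar)
    rwa [Matrix.conjTranspose_eq_transpose_of_trivial] at h
  have hpos2 : 0 ≤ (R * (K - Kstar) * X * (K - Kstar)ᵀ).trace := by
    have h := lqr_trace_mul_psd_nonneg hR.posSemidef hΔXΔ
    rw [show R * ((K - Kstar) * X * (K - Kstar)ᵀ) = R * (K - Kstar) * X * (K - Kstar)ᵀ by
      simp [Matrix.mul_assoc]] at h
    exact h
  have hcyc : ((K - Kstar)ᵀ * R * (K - Kstar) * X).trace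
      = (R * (K - Kstar) * X * (K - Kstar)ᵀ).trace := by
    rw [show (K - Kstar)ᵀ * R * (K - Kstar) * X
        = (K - Kstar)ᵀ * (R * (K - Kstar) * X) by simp [Matrix.mul_assoc],
      Matrix.trace_mul_comm]
  have hsplit : ((K - Kstar)ᵀ * S * (K - Kstar) * X).trace
      = ((K - Kstar)ᵀ * R * (K - Kstar) * X).trace
        + ((K - Kstar)ᵀ * (Bᵀ * Pstar * B) * (K - Kstar) * X).trace := by
    rw [hS]
    simp only [Matrix.mul_add, Matrix.add_mul, Matrix.trace_add]
  constructor
  · rw [main, hsplit, hcyc]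
    linarith
  · exact hpos2
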